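/- Let 𝒳_1,…,𝒳_k be n×1×p tensors with block diagonalizations bcirc(𝒳_j) = (F_p ⊗ I_n) blockdiag(x̃_1^{(j)},…,x̃_p^{(j)}) F_p^H. The tensors 𝒳_1,…,𝒳_k are T-linearly independent if and only if for each ℓ ∈ {1,…,p} the set {x̃_ℓ^{(1)},…,x̃_ℓ^{(k)}} ⊂ ℂ^n is linearly independent. -/

import Mathlib

open Matrix Complex Finset Kronecker
open scoped ComplexOrder

/-- The `p × p` circulant matrix with first column `v`. -/
noncomputable def circ (p : ℕ) (v : Fin p → ℂ) : Matrix (Fin p) (Fin p) ℂ :=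
  Matrix.of fun j k => v (j - k)

/-- The normalized (unitary) DFT matrix of order `p`, with `ω = exp(-2πi/p)`. -/
noncomputable def Fp (p : ℕ) : Matrix (Fin p) (Fin p) ℂ :=
  Matrix.of fun j k =>
    Complex.exp (-(2 * Real.pi * Complex.I * (j.val * k.val)) / p) / (Real.sqrt p : ℂ)

/-- Block circulant matrix of a third-order tensor given by its frontal slices. -/
noncomputable def bcirc {n m p : ℕ} (X : Fin p → Matrix (Fin n) (Fin m) ℂ) :
    Matrix (Fin p × Fin n) (Fin p × Fin m) ℂ :=
  Matrix.of fun jr kc => X (jr.1 - kc.1) jr.2 kc.2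

/-- Block circulant matrix of an `n × 1 × p` tensor (slices viewed as vectors). -/
noncomputable def bcircV {n p : ℕ} (X : Fin p → Fin n → ℂ) :
    Matrix (Fin p × Fin n) (Fin p) ℂ :=
  Matrix.of fun jr k => X (jr.1 - k) jr.2

/-- Block diagonal matrix (square-block index first). -/
noncomputable def blockDiagMat {n m p : ℕ} (D : Fin p → Matrix (Fin n) (Fin m) ℂ) :
    Matrix (Fin p × Fin n) (Fin p × Fin m) ℂ :=
  Matrix.of fun jr kc => if jr.1 = kc.1 then D jr.1 jr.2 kc.2 else 0

/-- Block diagonal matrix whose blocks are column vectors. -/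
noncomputable def blockDiagVec {n p : ℕ} (x : Fin p → Fin n → ℂ) :
    Matrix (Fin p × Fin n) (Fin p) ℂ :=
  Matrix.of fun jr k => if jr.1 = k then x k jr.2 else 0

/-- The T-product of two third-order tensors (slicewise cyclic convolution). -/
noncomputable def tmul {n m l p : ℕ} (A : Fin p → Matrix (Fin n) (Fin m) ℂ)
    (B : Fin p → Matrix (Fin m) (Fin l) ℂ) : Fin p → Matrix (Fin n) (Fin l) ℂ :=
  fun i => ∑ j, A (i - j) * B j

/-- The identity tensor: first frontal slice is `I_n`, the others are zero. -/
noncomputable def tId (n p : ℕ) [NeZero p] : Fin p → Matrix (Fin n) (Fin n) ℂ :=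
  fun i => if i = 0 then 1 else 0

/-- Conjugate T-transpose of a tensor. -/
noncomputable def tH {n m p : ℕ} (X : Fin p → Matrix (Fin n) (Fin m) ℂ) :
    Fin p → Matrix (Fin m) (Fin n) ℂ :=
  fun i => (X (-i))ᴴ

/-- The tubular tensor `𝒳ᴴ * 𝒴` for `n × 1 × p` tensors `𝒳, 𝒴`. -/
noncomputable def xHy {n p : ℕ} (X Y : Fin p → Fin n → ℂ) : Fin p → ℂ :=
  fun i => ∑ j, star (X (j - i)) ⬝ᵥ Y j

/-- The tubular tensor `𝒳ᴴ * 𝒳` for an `n × 1 × p` tensor `𝒳`. -/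
noncomputable def xHx {n p : ℕ} (X : Fin p → Fin n → ℂ) : Fin p → ℂ := xHy X X

/-- T-linear independence of a family of `n × 1 × p` tensors
(coefficients are tubular tensors acting via the T-product). -/
def TLinIndep {n p k : ℕ} (X : Fin k → Fin p → Fin n → ℂ) : Prop :=
  ∀ c : Fin k → Fin p → ℂ,
    (∀ i : Fin p, ∑ j, ∑ t, c j t • X j (i - t) = 0) → ∀ j, c j = 0

/-- `[λ]` is a tubular eigenvalue of the `n × n × p` tensor `𝒜`:
`𝒜 * 𝒳 = 𝒳 * [λ]` for some eigentensor `𝒳` with `𝒳ᴴ * 𝒳` invertible. -/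
def IsTubEig {n p : ℕ} (A : Fin p → Matrix (Fin n) (Fin n) ℂ) (lam : Fin p → ℂ) : Prop :=
  ∃ X : Fin p → Fin n → ℂ,
    (∀ i, ∑ t, (A (i - t)).mulVec (X t) = ∑ t, lam t • X (i - t)) ∧
    IsUnit (circ p (xHx X))
section AuxDFT

private lemma fp_eq_smul_vandermonde (p : ℕ) :
    Fp p = ((Real.sqrt p : ℝ) : ℂ)⁻¹ •
      Matrix.vandermonde (fun j : Fin p =>
        Complex.exp (-(2 * Real.pi * Complex.I * j.val) / p)) := by
  ext j k
  simp only [Fp, Matrix.smul_apply, Matrix.vandermonde, Matrix.of_apply, smul_eq_mul]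
  rw [← Complex.exp_nat_mul, div_eq_inv_mul]
  congr 2
  ring

private lemma fp_nodes_inj (p : ℕ) :
    Function.Injective (fun j : Fin p =>
      Complex.exp (-(2 * Real.pi * Complex.I * j.val) / p)) := by
  intro a b hab
  simp only at hab
  obtain ⟨m, hm⟩ := Complex.exp_eq_exp_iff_exists_int.mp hab
  have hp : (0 : ℕ) < p := a.pos
  have hp' : (p : ℂ) ≠ 0 := Nat.cast_ne_zero.mpr hp.ne'
  have hπ : (Real.pi : ℂ) ≠ 0 := Complex.ofReal_ne_zero.mpr Real.pi_ne_zero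
  have hI : Complex.I ≠ 0 := Complex.I_ne_zero
  have key : ((a.val : ℂ)) = (b.val : ℂ) - m * p := by
    field_simp at hm
    have h2 : (-(2 * (Real.pi:ℂ) * Complex.I * p)) ≠ 0 := by
      simp [hπ, hI, hp']
    apply mul_left_cancel₀ h2
    linear_combination (2 * (Real.pi:ℂ) * Complex.I * p) * hm
  have keyZ : (a.val : ℤ) = (b.val : ℤ) - m * p := by exact_mod_cast key
  have ha := a.isLt
  have hb := b.isLt
  have hm0 : m = 0 := by nlinarith [keyZ, Int.ofNat_lt.mpr ha, Int.ofNat_lt.mpr hb]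
  subst hm0
  apply Fin.ext
  omega

private lemma fp_det_isUnit (p : ℕ) (hp : 0 < p) : IsUnit (Fp p).det := by
  rw [isUnit_iff_ne_zero, fp_eq_smul_vandermonde, Matrix.det_smul]
  refine mul_ne_zero (pow_ne_zero _ (inv_ne_zero ?_))
    (Matrix.det_vandermonde_ne_zero_iff.mpr (fp_nodes_inj p))
  exact Complex.ofReal_ne_zero.mpr (Real.sqrt_ne_zero'.mpr (by exact_mod_cast hp))

private lemma kron_det_isUnit (n p : ℕ) (hp : 0 < p) :
    IsUnit ((Fp p ⊗ₖ (1 : Matrix (Fin n) (Fin n) ℂ))).det := by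
  rw [Matrix.det_kronecker]
  simpa using (fp_det_isUnit p hp).pow _

end AuxDFT

/-- T-linear independence is equivalent to linear independence of the
Fourier-block vectors in each of the `p` blocks. -/
theorem tLinIndep_iff_blocks_linIndep (n p k : ℕ) (X xt : Fin k → Fin p → Fin n → ℂ)
    (h : ∀ j, bcircV (X j) =
      (Fp p ⊗ₖ (1 : Matrix (Fin n) (Fin n) ℂ)) * blockDiagVec (xt j) * (Fp p)ᴴ) :
    TLinIndep X ↔ ∀ ℓ : Fin p, LinearIndependent ℂ (fun j : Fin k => xt j ℓ) := by
  classical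
  rcases Nat.eq_zero_or_pos p with hp | hp
  · subst hp
    constructor
    · intro _ ℓ; exact ℓ.elim0
    · intro _ c _ j; funext t; exact t.elim0
  · have hUdet := fp_det_isUnit p hp
    have hUHdet : IsUnit ((Fp p)ᴴ).det := by
      rw [Matrix.det_conjTranspose]; exact hUdet.star
    have hKdet := kron_det_isUnit n p hp
    have key : ∀ c : Fin k → Fin p → ℂ,
        (∀ i : Fin p, ∑ j, ∑ t, c j t • X j (i - t) = 0) ↔
        (∀ ℓ : Fin p, ∑ j, ((Fp p)ᴴ.mulVec (c j)) ℓ • xt j ℓ = 0) := by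
      intro c
      set v : Fin p × Fin n → ℂ :=
        fun q => ∑ j, ((Fp p)ᴴ.mulVec (c j)) q.1 * xt j q.1 q.2 with hv
      have hmv : ∀ (i : Fin p) (r : Fin n),
          (∑ j, ∑ t, c j t • X j (i - t)) r =
          ((Fp p ⊗ₖ (1 : Matrix (Fin n) (Fin n) ℂ)).mulVec v) (i, r) := by
        intro i r
        have lhs_eq : (∑ j, ∑ t, c j t • X j (i - t)) r
            = ∑ j, ((bcircV (X j)).mulVec (c j)) (i, r) := by
          simp [Matrix.mulVec, dotProduct, bcircV, Finset.sum_apply,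
            Pi.smul_apply, smul_eq_mul, mul_comm]
        rw [lhs_eq]
        have step : ∀ j, ((bcircV (X j)).mulVec (c j)) (i, r)
            = ∑ ℓ, Fp p i ℓ * (((Fp p)ᴴ.mulVec (c j)) ℓ * xt j ℓ r) := by
          intro j
          rw [h j, Matrix.mul_assoc, ← Matrix.mulVec_mulVec, ← Matrix.mulVec_mulVec]
          simp only [Matrix.mulVec, dotProduct, Matrix.kroneckerMap_apply,
            Matrix.one_apply, Fintype.sum_prod_type, blockDiagVec, Matrix.of_apply,
            ite_mul, mul_ite, mul_one, mul_zero, zero_mul, Finset.sum_ite_eq,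
            Finset.sum_ite_eq', Finset.mem_univ, if_true]
          refine Finset.sum_congr rfl fun ℓ _ => by ring
        simp only [step]
        have rhs : ((Fp p ⊗ₖ (1 : Matrix (Fin n) (Fin n) ℂ)).mulVec v) (i, r)
            = ∑ ℓ, Fp p i ℓ * v (ℓ, r) := by
          simp only [Matrix.mulVec, dotProduct, Matrix.kroneckerMap_apply,
            Matrix.one_apply, Fintype.sum_prod_type, ite_mul, mul_ite, mul_one,
            mul_zero, zero_mul, Finset.sum_ite_eq, Finset.sum_ite_eq',
            Finset.mem_univ, if_true]
        rw [rhs, Finset.sum_comm]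
        refine Finset.sum_congr rfl fun ℓ _ => ?_
        simp only [hv, Finset.mul_sum]
      constructor
      · intro hc ℓ
        have hv0 : (Fp p ⊗ₖ (1 : Matrix (Fin n) (Fin n) ℂ)).mulVec v = 0 := by
          funext q
          obtain ⟨i, r⟩ := q
          rw [← hmv i r, hc i]
          rfl
        have hv' : v = 0 := Matrix.eq_zero_of_mulVec_eq_zero hKdet.ne_zero hv0
        funext r
        have := congrFun hv' (ℓ, r)
        simpa [hv, Finset.sum_apply] using this
      · intro hd i
        have hv' : v = 0 := by
          funext q
          have := congrFun (hd q.1) q.2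
          simpa [hv, Finset.sum_apply] using this
        funext r
        rw [hmv i r, hv', Matrix.mulVec_zero]
        rfl
    constructor
    · intro hT ℓ
      rw [Fintype.linearIndependent_iff]
      intro g hg j
      set d : Fin k → Fin p → ℂ := fun j ℓ' => if ℓ' = ℓ then g j else 0 with hdd
      set c : Fin k → Fin p → ℂ := fun j => (((Fp p)ᴴ)⁻¹).mulVec (d j) with hc
      have hcd : ∀ j, ((Fp p)ᴴ).mulVec (c j) = d j := by
        intro j
        rw [hc, Matrix.mulVec_mulVec, Matrix.mul_nonsing_inv _ hUHdet, Matrix.one_mulVec]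
      have hcond : ∀ i, ∑ j, ∑ t, c j t • X j (i - t) = 0 := by
        rw [key]
        intro ℓ'
        by_cases hℓ : ℓ' = ℓ
        · subst hℓ
          simp only [hcd, hdd, if_pos rfl]
          exact hg
        · simp [hcd, hdd, hℓ]
      have hc0 := hT c hcond j
      have hd0 : d j = 0 := by rw [← hcd j, hc0, Matrix.mulVec_zero]
      have := congrFun hd0 ℓ
      simpa [hdd] using this
    · intro H c hcond j
      have hd := (key c).mp hcond
      have hdj : ((Fp p)ᴴ).mulVec (c j) = 0 := by
        funext ℓ
        exact (Fintype.linearIndependent_iff.mp (H ℓ))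
          (fun j => ((Fp p)ᴴ.mulVec (c j)) ℓ) (hd ℓ) j
      exact Matrix.eq_zero_of_mulVec_eq_zero hUHdet.ne_zero hdj
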